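/- For an ideal I of a commutative ring R, I is countable strongly annihilated in R if and only if the ideal I[x] of polynomials with coefficients in I is countable strongly annihilated in the polynomial ring R[x]. -/
import Mathlib


/-- An ideal `I` is countable strongly annihilated if for each countable subset `S ⊆ I`
and each `b ∉ I` there exists `c` with `c * a = 0` for all `a ∈ S` but `c * b ≠ 0`. -/
def CountableStronglyAnnihilated {R : Type*} [CommRing R] (I : Ideal R) : Prop :=
  ∀ S : Set R, S.Countable → S ⊆ I → ∀ b ∉ I, ∃ c : R, (∀ a ∈ S, c * a = 0) ∧ c * b ≠ 0

/-- `I` is countable strongly annihilated in `R` iff `I[x]` (the ideal of polynomials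
all of whose coefficients lie in `I`, i.e. `I.map C`) is countable strongly annihilated
in `R[x]`. -/
theorem stmt6 {R : Type*} [CommRing R] (I : Ideal R) :
    CountableStronglyAnnihilated I ↔
      CountableStronglyAnnihilated (I.map (Polynomial.C : R →+* Polynomial R)) := by
  constructor
  · intro h S hScnt hSsub b hb
    -- b has a coefficient not in I
    rw [Ideal.mem_map_C_iff] at hb
    push_neg at hb
    obtain ⟨n, hn⟩ := hb
    -- the set of all coefficients of members of S
    set S' : Set R := ⋃ p ∈ S, Set.range p.coeff with hS'
    have hS'cnt : S'.Countable :=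
      hScnt.biUnion (fun p _ => Set.countable_range _)
    have hS'sub : S' ⊆ I := by
      intro r hr
      simp only [hS', Set.mem_iUnion, Set.mem_range] at hr
      obtain ⟨p, hp, m, rfl⟩ := hr
      exact (Ideal.mem_map_C_iff.mp (hSsub hp)) m
    obtain ⟨c, hc1, hc2⟩ := h S' hS'cnt hS'sub (b.coeff n) hn
    refine ⟨Polynomial.C c, ?_, ?_⟩
    · intro p hp
      ext m
      simp only [Polynomial.coeff_C_mul, Polynomial.coeff_zero]
      exact hc1 _ (Set.mem_biUnion hp (Set.mem_range_self m))
    · intro hcb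
      apply hc2
      have := congrArg (fun q => Polynomial.coeff q n) hcb
      simpa [Polynomial.coeff_C_mul] using this
  · intro h S hScnt hSsub b hb
    have hCb : (Polynomial.C b : Polynomial R) ∉ I.map (Polynomial.C : R →+* Polynomial R) := by
      intro hmem
      exact hb (by simpa using (Ideal.mem_map_C_iff.mp hmem) 0)
    have hCS : (Polynomial.C '' S : Set (Polynomial R)) ⊆ I.map Polynomial.C := by
      rintro _ ⟨a, ha, rfl⟩
      exact Ideal.mem_map_of_mem _ (hSsub ha)
    obtain ⟨c, hc1, hc2⟩ := h (Polynomial.C '' S) (hScnt.image _) hCS _ hCb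
    have : ∃ n, (c * Polynomial.C b).coeff n ≠ 0 := by
      by_contra hcon
      push_neg at hcon
      exact hc2 (Polynomial.ext hcon)
    obtain ⟨n, hn⟩ := this
    refine ⟨c.coeff n, ?_, ?_⟩
    · intro a ha
      have := hc1 _ (Set.mem_image_of_mem _ ha)
      have := congrArg (fun q => Polynomial.coeff q n) this
      simpa [Polynomial.coeff_mul_C] using this
    · simpa [Polynomial.coeff_mul_C] using hn
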